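/- Let G be a balanced bipartite graph on 2n vertices (n vertices on each side) with minimum degree at least 3n/4. Then there exists an absolute constant C and a probability distribution μ on perfect matchings of G that is (C/n)-spread: for every matching M' of G with s edges, the probability that a μ-random perfect matching contains all edges of M' is at most (C/n)^s. -/

import Mathlib

open Finset Function Nat

namespace Stmt5

variable {n : ℕ}

def PM (E : Finset (Fin n × Fin n)) : Finset (Fin n → Fin n) :=
  univ.filter fun f => Function.Bijective f ∧ ∀ i, (i, f i) ∈ E

lemma mem_PM {E : Finset (Fin n × Fin n)} {f : Fin n → Fin n} :
    f ∈ PM E ↔ Function.Bijective f ∧ ∀ i, (i, f i) ∈ E := by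
  simp [PM]

lemma card_bij : (univ.filter fun f : Fin n → Fin n => Function.Bijective f).card = n ! := by
  have e : {f : Fin n → Fin n // Function.Bijective f} ≃ Equiv.Perm (Fin n) :=
    { toFun := fun f => Equiv.ofBijective f.1 f.2
      invFun := fun e => ⟨e, e.bijective⟩
      left_inv := fun f => Subtype.ext rfl
      right_inv := fun e => Equiv.ext fun x => rfl }
  calc (univ.filter fun f : Fin n → Fin n => Function.Bijective f).card
      = Fintype.card {f : Fin n → Fin n // Function.Bijective f} := by
        rw [Fintype.card_subtype]
    _ = Fintype.card (Equiv.Perm (Fin n)) := Fintype.card_congr e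
    _ = n ! := by rw [Fintype.card_perm, Fintype.card_fin]

lemma PM_univ_card : (PM (univ : Finset (Fin n × Fin n))).card = n ! := by
  rw [← card_bij]
  congr 1
  apply filter_congr
  intro f _
  simp

/-- Hall: the perfect matching set is nonempty. -/
lemma PM_nonempty (hn : 0 < n) (E : Finset (Fin n × Fin n))
    (h1 : ∀ a : Fin n, 3 * n ≤ 4 * (E.filter (fun e => e.1 = a)).card)
    (h2 : ∀ b : Fin n, 3 * n ≤ 4 * (E.filter (fun e => e.2 = b)).card) :
    (PM E).Nonempty := by
  classical
  set t : Fin n → Finset (Fin n) := fun a => (E.filter (fun e => e.1 = a)).image Prod.snd with ht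
  have hcard : ∀ a, (t a).card = (E.filter (fun e => e.1 = a)).card := by
    intro a
    apply Finset.card_image_of_injOn
    intro e he e' he' hee
    simp only [mem_coe, mem_filter] at he he'
    exact Prod.ext (he.2.trans he'.2.symm) hee
  have hmem : ∀ a b, b ∈ t a ↔ (a, b) ∈ E := by
    intro a b
    simp only [ht, mem_image, mem_filter]
    constructor
    · rintro ⟨e, ⟨heE, h1'⟩, h2'⟩
      rwa [← h1', ← h2']
    · intro h; exact ⟨(a, b), ⟨h, rfl⟩, rfl⟩
  have hall : ∀ A : Finset (Fin n), A.card ≤ (A.biUnion t).card := by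
    intro A
    rcases A.eq_empty_or_nonempty with rfl | ⟨a, haA⟩
    · simp
    by_cases hAll : ∀ b : Fin n, ∃ a' ∈ A, (a', b) ∈ E
    · have : A.biUnion t = univ := by
        apply eq_univ_of_forall
        intro b
        obtain ⟨a', ha', hab⟩ := hAll b
        exact mem_biUnion.2 ⟨a', ha', (hmem a' b).2 hab⟩
      rw [this]
      exact card_le_card (subset_univ A)
    · push_neg at hAll
      obtain ⟨b, hb⟩ := hAll
      -- A is disjoint from the column of b
      have hsub : A ⊆ univ \ (E.filter (fun e => e.2 = b)).image Prod.fst := by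
        intro a' ha'
        simp only [mem_sdiff, mem_univ, true_and, mem_image, mem_filter]
        rintro ⟨e, ⟨heE, h2'⟩, h1'⟩
        exact hb a' ha' (by rwa [← h1', ← h2'])
      have hcol : ((E.filter (fun e => e.2 = b)).image Prod.fst).card
          = (E.filter (fun e => e.2 = b)).card := by
        apply Finset.card_image_of_injOn
        intro e he e' he' hee
        simp only [mem_coe, mem_filter] at he he'
        exact Prod.ext hee (he.2.trans he'.2.symm)
      have hA : A.card ≤ n - (E.filter (fun e => e.2 = b)).card := by
        calc A.card ≤ (univ \ (E.filter (fun e => e.2 = b)).image Prod.fst).card :=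
              card_le_card hsub
          _ = n - (E.filter (fun e => e.2 = b)).card := by
              rw [card_sdiff_of_subset (subset_univ _), Finset.card_univ, Fintype.card_fin, hcol]
      have hta : t a ⊆ A.biUnion t := fun b' hb' => mem_biUnion.2 ⟨a, haA, hb'⟩
      have h4 : 3 * n ≤ 4 * (t a).card := by rw [hcard]; exact h1 a
      have hcb := h2 b
      have := card_le_card hta
      omega
  obtain ⟨f, hfinj, hft⟩ := (Finset.all_card_le_biUnion_card_iff_exists_injective t).1 hall
  exact ⟨f, mem_PM.2 ⟨Finite.injective_iff_bijective.mp hfinj, fun i => (hmem i (f i)).1 (hft i)⟩⟩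

/-- The rotation / switching lemma. -/
lemma rot (hn : 0 < n) (E E' : Finset (Fin n × Fin n)) (hEE' : E ⊆ E')
    (h1 : ∀ a : Fin n, 3 * n ≤ 4 * (E.filter (fun e => e.1 = a)).card)
    (h2 : ∀ b : Fin n, 3 * n ≤ 4 * (E.filter (fun e => e.2 = b)).card)
    {s : ℕ} (x y : Fin s → Fin n) (a b : Fin n)
    (ha : ∀ i, x i ≠ a) (hb : ∀ i, y i ≠ b)
    (m : ℕ) (hm : 2 * (m + n + s) ≤ 3 * n) :
    m * ((PM E').filter fun f => (∀ i, f (x i) = y i) ∧ f a = b).card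
      ≤ ((PM E').filter fun f => ∀ i, f (x i) = y i).card := by
  classical
  haveI : Nonempty (Fin n) := ⟨⟨0, hn⟩⟩
  set A := (PM E').filter fun f => (∀ i, f (x i) = y i) ∧ f a = b with hA
  set B := (PM E').filter (fun f => ∀ i, f (x i) = y i) with hB
  set T : (Fin n → Fin n) → Finset (Fin n) := fun f =>
    univ.filter fun b' => (a, b') ∈ E' ∧ (invFun f b', b) ∈ E' ∧ ∀ i, y i ≠ b' with hT
  have hTcard : ∀ f ∈ A, m ≤ (T f).card := by
    intro f hf
    rw [hA, mem_filter, mem_PM] at hf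
    obtain ⟨⟨hbij, hfE⟩, hfxy, hfab⟩ := hf
    set R := (E'.filter (fun e => e.1 = a)).image Prod.snd with hR
    set Cb := (E'.filter (fun e => e.2 = b)).image Prod.fst with hCb
    set X := Cb.image f with hX
    have hRcard : (E'.filter (fun e => e.1 = a)).card = R.card := by
      rw [hR]
      refine (Finset.card_image_of_injOn ?_).symm
      intro e he e' he' hee
      simp only [mem_coe, mem_filter] at he he'
      exact Prod.ext (he.2.trans he'.2.symm) hee
    have hCbcard : (E'.filter (fun e => e.2 = b)).card = Cb.card := by
      rw [hCb]
      refine (Finset.card_image_of_injOn ?_).symm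
      intro e he e' he' hee
      simp only [mem_coe, mem_filter] at he he'
      exact Prod.ext hee (he.2.trans he'.2.symm)
    have hXcard : X.card = Cb.card := Finset.card_image_of_injective _ hbij.injective
    have hRlb : 3 * n ≤ 4 * R.card := by
      rw [← hRcard]
      exact (h1 a).trans (Nat.mul_le_mul_left 4 (card_le_card (filter_subset_filter _ hEE')))
    have hXlb : 3 * n ≤ 4 * X.card := by
      rw [hXcard, ← hCbcard]
      exact (h2 b).trans (Nat.mul_le_mul_left 4 (card_le_card (filter_subset_filter _ hEE')))
    have hsub : (R ∩ X) \ (univ.image y) ⊆ T f := by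
      intro b' hb'
      simp only [mem_sdiff, mem_inter, mem_image, mem_univ, true_and, not_exists] at hb'
      obtain ⟨⟨hbR, hbX⟩, hbY⟩ := hb'
      rw [hT, mem_filter]
      refine ⟨mem_univ _, ?_, ?_, fun i => hbY i⟩
      · rw [hR] at hbR
        simp only [mem_image, mem_filter] at hbR
        obtain ⟨e, ⟨heE, he1⟩, he2⟩ := hbR
        rwa [← he1, ← he2]
      · rw [hX, hCb] at hbX
        simp only [mem_image, mem_filter] at hbX
        obtain ⟨a', ⟨e, ⟨heE, he2⟩, he1⟩, hfa'⟩ := hbX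
        have : invFun f b' = a' := by rw [← hfa', leftInverse_invFun hbij.injective]
        rw [this, ← he1, ← he2]
        exact heE
    have c1 : R.card + X.card ≤ n + (R ∩ X).card := by
      have := Finset.card_inter_add_card_union R X
      have hle : (R ∪ X).card ≤ n := by
        simpa using card_le_card (subset_univ (R ∪ X))
      omega
    have c2 : (R ∩ X).card ≤ ((R ∩ X) \ (univ.image y)).card + (univ.image y).card :=
      Finset.card_le_card_sdiff_add_card
    have c3 : (univ.image y).card ≤ s := by
      refine Finset.card_image_le.trans ?_
      simp
    have c4 := card_le_card hsub
    omega
  -- the rotation map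
  set Φ : (Σ _ : Fin n → Fin n, Fin n) → (Fin n → Fin n) :=
    fun p => p.1 ∘ (Equiv.swap a (invFun p.1 p.2)) with hΦ
  have hmaps : ∀ p ∈ A.sigma (fun f => T f), Φ p ∈ B := by
    rintro ⟨f, b'⟩ hp
    rw [mem_sigma] at hp
    obtain ⟨hfA, hbT⟩ := hp
    rw [hA, mem_filter, mem_PM] at hfA
    obtain ⟨⟨hbij, hfE⟩, hfxy, hfab⟩ := hfA
    rw [hT, mem_filter] at hbT
    obtain ⟨-, hab', ha'b, hyb'⟩ := hbT
    dsimp only at hbij hfE hfxy hfab hab' ha'b hyb'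
    set a' := invFun f b' with ha'
    have hfa' : f a' = b' := rightInverse_invFun hbij.surjective b'
    rw [hB, mem_filter, mem_PM]
    refine ⟨⟨hbij.comp (Equiv.swap a a').bijective, ?_⟩, ?_⟩
    · intro z
      rcases eq_or_ne z a with rfl | hz
      · simpa [hΦ, ← ha', Equiv.swap_apply_left, hfa'] using hab'
      rcases eq_or_ne z a' with rfl | hz'
      · simpa [hΦ, ← ha', Equiv.swap_apply_right, hfab] using ha'b
      · simpa [hΦ, ← ha', Equiv.swap_apply_of_ne_of_ne hz hz'] using hfE z
    · intro i
      have hxa' : x i ≠ a' := by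
        intro h
        exact hyb' i (by rw [← hfxy i, h, hfa'])
      simpa [hΦ, ← ha', Equiv.swap_apply_of_ne_of_ne (ha i) hxa'] using hfxy i
  have hinj : Set.InjOn Φ (A.sigma (fun f => T f)) := by
    rintro ⟨f₁, b₁⟩ hp₁ ⟨f₂, b₂⟩ hp₂ heq
    simp only [mem_coe, mem_sigma] at hp₁ hp₂
    obtain ⟨hf₁A, hb₁T⟩ := hp₁
    obtain ⟨hf₂A, hb₂T⟩ := hp₂
    rw [hA, mem_filter, mem_PM] at hf₁A hf₂A
    obtain ⟨⟨hbij₁, _⟩, _, hfab₁⟩ := hf₁A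
    obtain ⟨⟨hbij₂, _⟩, _, hfab₂⟩ := hf₂A
    set a₁ := invFun f₁ b₁ with ha₁
    set a₂ := invFun f₂ b₂ with ha₂
    have hfa₁ : f₁ a₁ = b₁ := rightInverse_invFun hbij₁.surjective b₁
    have hfa₂ : f₂ a₂ = b₂ := rightInverse_invFun hbij₂.surjective b₂
    have hga₁ : Φ ⟨f₁, b₁⟩ a = b₁ := by simp [hΦ, ← ha₁, Equiv.swap_apply_left, hfa₁]
    have hga₂ : Φ ⟨f₂, b₂⟩ a = b₂ := by simp [hΦ, ← ha₂, Equiv.swap_apply_left, hfa₂]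
    have hbeq : b₁ = b₂ := by rw [← hga₁, ← hga₂, heq]
    have hgbij : Function.Bijective (Φ ⟨f₁, b₁⟩) :=
      hbij₁.comp (Equiv.swap a a₁).bijective
    have hg₁ : Φ ⟨f₁, b₁⟩ a₁ = b := by simp [hΦ, ← ha₁, Equiv.swap_apply_right, hfab₁]
    have hg₂ : Φ ⟨f₁, b₁⟩ a₂ = b := by
      have : Φ ⟨f₂, b₂⟩ a₂ = b := by simp [hΦ, ← ha₂, Equiv.swap_apply_right, hfab₂]
      rw [heq]; exact this
    have haeq : a₁ = a₂ := hgbij.injective (hg₁.trans hg₂.symm)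
    have hfeq : f₁ = f₂ := by
      funext z
      have e₁ : f₁ z = Φ ⟨f₁, b₁⟩ (Equiv.swap a a₁ z) := by
        simp [hΦ, ← ha₁, Equiv.swap_apply_self]
      have e₂ : f₂ z = Φ ⟨f₂, b₂⟩ (Equiv.swap a a₂ z) := by
        simp [hΦ, ← ha₂, Equiv.swap_apply_self]
      rw [e₁, e₂, heq, haeq]
    subst hfeq
    simp [hbeq]
  calc m * A.card = ∑ _f ∈ A, m := by rw [sum_const, smul_eq_mul, mul_comm]
    _ ≤ ∑ f ∈ A, (T f).card := sum_le_sum hTcard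
    _ = (A.sigma (fun f => T f)).card := (Finset.card_sigma _ _).symm
    _ ≤ B.card := Finset.card_le_card_of_injOn Φ hmaps hinj

lemma chain (hn : 0 < n) (E : Finset (Fin n × Fin n))
    (h1 : ∀ a : Fin n, 3 * n ≤ 4 * (E.filter (fun e => e.1 = a)).card)
    (h2 : ∀ b : Fin n, 3 * n ≤ 4 * (E.filter (fun e => e.2 = b)).card) (m : ℕ) :
    ∀ (s : ℕ) (x y : Fin s → Fin n), Function.Injective x → Function.Injective y →
      2 * (m + n + s) ≤ 3 * n + 2 →
      ((PM E).filter fun f => ∀ i, f (x i) = y i).card * m ^ s ≤ (PM E).card := by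
  intro s
  induction s with
  | zero =>
      intro x y _ _ _
      rw [pow_zero, mul_one]
      exact card_le_card (filter_subset _ _)
  | succ s ih =>
      intro x y hx hy hs
      set x' : Fin s → Fin n := fun i => x i.succ with hx'd
      set y' : Fin s → Fin n := fun i => y i.succ with hy'd
      have hx' : Function.Injective x' := fun i j h => Fin.succ_injective _ (hx h)
      have hy' : Function.Injective y' := fun i j h => Fin.succ_injective _ (hy h)
      have ha : ∀ i, x' i ≠ x 0 := fun i h => (Fin.succ_ne_zero i) (hx h)
      have hb : ∀ i, y' i ≠ y 0 := fun i h => (Fin.succ_ne_zero i) (hy h)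
      have hrot := rot hn E E (subset_refl E) h1 h2 x' y' (x 0) (y 0) ha hb m (by omega)
      have hfe : ((PM E).filter fun f => ∀ i, f (x i) = y i)
          = (PM E).filter fun f => (∀ i, f (x' i) = y' i) ∧ f (x 0) = y 0 := by
        apply filter_congr
        intro f _
        rw [Fin.forall_fin_succ]
        tauto
      rw [hfe, pow_succ]
      set A := (PM E).filter fun f => (∀ i, f (x' i) = y' i) ∧ f (x 0) = y 0 with hAd
      have h1' : A.card * (m ^ s * m) = (m * A.card) * m ^ s := by ring
      rw [h1']
      have hcond : 2 * (m + n + s) ≤ 3 * n + 2 := by linarith [hs]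
      have hmul : (m * A.card) * m ^ s ≤ ((PM E).filter fun f => ∀ i, f (x' i) = y' i).card * m ^ s :=
        Nat.mul_le_mul_right _ hrot
      exact le_trans hmul (ih x' y' hx' hy' hcond)

lemma perm_lb (hn : 0 < n) (E : Finset (Fin n × Fin n))
    (h1 : ∀ a : Fin n, 3 * n ≤ 4 * (E.filter (fun e => e.1 = a)).card)
    (h2 : ∀ b : Fin n, 3 * n ≤ 4 * (E.filter (fun e => e.2 = b)).card)
    (m : ℕ) (hm : 2 * (m + n) ≤ 3 * n) (hm1 : 1 ≤ m) :
    ∀ (j : ℕ) (E' : Finset (Fin n × Fin n)), E ⊆ E' → n ^ 2 ≤ E'.card + j →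
      (n ! : ℝ) * (1 - 1 / m) ^ j ≤ ((PM E').card : ℝ) := by
  have hm0 : (0:ℝ) < m := by exact_mod_cast hm1
  have h01 : (0:ℝ) ≤ 1 - 1 / m := by
    have : 1 / (m:ℝ) ≤ 1 := by
      rw [div_le_one hm0]; exact_mod_cast hm1
    linarith
  have h11 : (1:ℝ) - 1 / m ≤ 1 := by
    have : 0 ≤ 1 / (m:ℝ) := by positivity
    linarith
  intro j
  induction j with
  | zero =>
      intro E' hEE' hcard
      have hEu : E' = univ := by
        apply Finset.eq_univ_of_card
        have := card_le_univ E'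
        simp only [Fintype.card_prod, Fintype.card_fin] at this ⊢
        nlinarith [hcard]
      subst hEu
      rw [PM_univ_card, pow_zero, mul_one]
  | succ j ih =>
      intro E' hEE' hcard
      by_cases hc : n ^ 2 ≤ E'.card + j
      · have h := ih E' hEE' hc
        have hle : ((n ! :ℝ)) * (1 - 1/m) ^ (j+1) ≤ (n ! : ℝ) * (1 - 1/m) ^ j := by
          apply mul_le_mul_of_nonneg_left _ (by positivity)
          exact pow_le_pow_of_le_one h01 h11 (Nat.le_succ j)
        linarith
      · have hlt : E'.card < n ^ 2 := by omega
        have hex : ∃ e : Fin n × Fin n, e ∉ E' := by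
          by_contra h
          push_neg at h
          have : E' = univ := eq_univ_of_forall h
          rw [this] at hlt
          simp only [Finset.card_univ, Fintype.card_prod, Fintype.card_fin] at hlt
          nlinarith [hlt]
        obtain ⟨⟨a, b⟩, he⟩ := hex
        set E'' := insert (a, b) E' with hE''
        have hsub : E ⊆ E'' := hEE'.trans (subset_insert _ _)
        have hcard'' : E''.card = E'.card + 1 := card_insert_of_notMem he
        have hIH := ih E'' hsub (by omega)
        have hdisj : Disjoint (PM E') ((PM E'').filter fun f => f a = b) := by
          rw [Finset.disjoint_left]
          intro f hf hf'
          simp only [mem_filter, PM, mem_univ, true_and] at hf hf'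
          exact he (hf'.2 ▸ hf.2 a)
        have hunion : PM E' ∪ ((PM E'').filter fun f => f a = b) = PM E'' := by
          apply Finset.Subset.antisymm
          · apply union_subset
            · intro f hf
              simp only [PM, mem_filter, mem_univ, true_and] at hf ⊢
              exact ⟨hf.1, fun i => mem_insert_of_mem (hf.2 i)⟩
            · exact filter_subset _ _
          · intro f hf
            by_cases hfab : f a = b
            · exact mem_union_right _ (mem_filter.2 ⟨hf, hfab⟩)
            · apply mem_union_left
              simp only [PM, mem_filter, mem_univ, true_and] at hf ⊢
              refine ⟨hf.1, fun i => ?_⟩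
              rcases mem_insert.1 (hf.2 i) with h | h
              · exfalso
                have hia : i = a := congrArg Prod.fst h
                subst hia
                exact hfab (congrArg Prod.snd h)
              · exact h
        have hsplit : (PM E'').card = (PM E').card + ((PM E'').filter fun f => f a = b).card := by
          rw [← card_union_of_disjoint hdisj, hunion]
        have hrot := rot hn E E'' hsub h1 h2 Fin.elim0 Fin.elim0
          a b (fun i => i.elim0) (fun i => i.elim0) m (by simpa using hm)
        simp only [IsEmpty.forall_iff, true_and, Finset.filter_true] at hrot
        have hr1 : (m:ℝ) * (((PM E'').filter fun f => f a = b).card : ℝ) ≤ ((PM E'').card : ℝ) := by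
          exact_mod_cast hrot
        have hr2 : ((PM E'').card : ℝ)
            = ((PM E').card : ℝ) + (((PM E'').filter fun f => f a = b).card : ℝ) := by
          exact_mod_cast hsplit
        have hy : (((PM E'').filter fun f => f a = b).card : ℝ) ≤ ((PM E'').card : ℝ) / m := by
          rw [le_div_iff₀ hm0]
          linarith [hr1]
        have hfin : (1 - 1/(m:ℝ)) * ((PM E'').card : ℝ) ≤ ((PM E').card : ℝ) := by
          have hxx : (1 - 1/(m:ℝ)) * ((PM E'').card : ℝ)
              = ((PM E'').card : ℝ) - ((PM E'').card : ℝ) / m := by ring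
          linarith [hy, hr2, hxx]
        calc (n ! : ℝ) * (1 - 1/m) ^ (j+1) = (1 - 1/m) * ((n ! : ℝ) * (1 - 1/m) ^ j) := by ring
          _ ≤ (1 - 1/m) * ((PM E'').card : ℝ) := by
              apply mul_le_mul_of_nonneg_left hIH h01
          _ ≤ ((PM E').card : ℝ) := hfin

lemma card_fix_le (E : Finset (Fin n × Fin n)) {s : ℕ} (x y : Fin s → Fin n)
    (hx : Function.Injective x) :
    ((PM E).filter fun f => ∀ i, f (x i) = y i).card ≤ n ^ (n - s) := by
  classical
  set K : Finset (Fin n) := (univ.image x)ᶜ with hK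
  have hKcard : K.card = n - s := by
    rw [hK, card_compl, Finset.card_image_of_injective _ hx]
    simp
  set Φ : (Fin n → Fin n) → (↥K → Fin n) := fun f z => f z.1 with hΦ
  have hinj : Set.InjOn Φ ((PM E).filter fun f => ∀ i, f (x i) = y i) := by
    intro f hf g hg hfg
    simp only [mem_coe, mem_filter] at hf hg
    funext w
    by_cases hw : w ∈ univ.image x
    · obtain ⟨i, -, hi⟩ := mem_image.1 hw
      rw [← hi, hf.2 i, hg.2 i]
    · have hwK : w ∈ K := by rw [hK, mem_compl]; exact hw
      exact congrFun hfg ⟨w, hwK⟩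
  calc ((PM E).filter fun f => ∀ i, f (x i) = y i).card
      ≤ (univ : Finset (↥K → Fin n)).card :=
        Finset.card_le_card_of_injOn Φ (fun _ _ => mem_univ _) hinj
    _ = n ^ (n - s) := by
        rw [Finset.card_univ, Fintype.card_fun, Fintype.card_coe, hKcard, Fintype.card_fin]

lemma pow_le_exp_mul_factorial : ∀ k : ℕ, ((k:ℝ)) ^ k ≤ Real.exp 1 ^ k * k ! := by
  intro k
  induction k with
  | zero => simp
  | succ k ih =>
    have he1 : (1:ℝ) ≤ Real.exp 1 := by
      have := Real.add_one_le_exp (1:ℝ); linarith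
    rcases Nat.eq_zero_or_pos k with rfl | hk
    · push_cast
      simpa using he1
    · have hk0 : (0:ℝ) < k := by exact_mod_cast hk
      have key : ((k:ℝ)+1) ^ k ≤ (k:ℝ) ^ k * Real.exp 1 := by
        have h1 : (k:ℝ)+1 ≤ k * Real.exp (1/k) := by
          have h2 := Real.add_one_le_exp (1/(k:ℝ))
          have h3 : (k:ℝ) * (1/k + 1) ≤ k * Real.exp (1/k) :=
            mul_le_mul_of_nonneg_left h2 (le_of_lt hk0)
          calc (k:ℝ)+1 = k * (1/k + 1) := by field_simp; ring
            _ ≤ k * Real.exp (1/k) := h3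
        calc ((k:ℝ)+1) ^ k ≤ ((k:ℝ) * Real.exp (1/k)) ^ k :=
              pow_le_pow_left₀ (by positivity) h1 k
          _ = (k:ℝ) ^ k * Real.exp (1/k) ^ k := mul_pow _ _ _
          _ = (k:ℝ) ^ k * Real.exp (k * (1/k)) := by rw [Real.exp_nat_mul]
          _ = (k:ℝ) ^ k * Real.exp 1 := by rw [mul_one_div, div_self (ne_of_gt hk0)]
      have hstep : ((k:ℝ)+1) ^ (k+1) ≤ ((k:ℝ)+1) * ((k:ℝ) ^ k * Real.exp 1) := by
        rw [pow_succ]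
        calc ((k:ℝ)+1) ^ k * ((k:ℝ)+1) = ((k:ℝ)+1) * ((k:ℝ)+1)^k := by ring
          _ ≤ ((k:ℝ)+1) * ((k:ℝ)^k * Real.exp 1) :=
            mul_le_mul_of_nonneg_left key (by positivity)
      have hstep2 : ((k:ℝ)+1) * ((k:ℝ) ^ k * Real.exp 1)
          ≤ ((k:ℝ)+1) * (Real.exp 1 ^ k * k ! * Real.exp 1) := by
        apply mul_le_mul_of_nonneg_left _ (by positivity)
        apply mul_le_mul_of_nonneg_right ih (Real.exp_pos 1).le
      calc (((k+1:ℕ)):ℝ) ^ (k+1) = ((k:ℝ)+1) ^ (k+1) := by push_cast; ring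
        _ ≤ ((k:ℝ)+1) * ((k:ℝ) ^ k * Real.exp 1) := hstep
        _ ≤ ((k:ℝ)+1) * (Real.exp 1 ^ k * k ! * Real.exp 1) := hstep2
        _ = Real.exp 1 ^ (k+1) * ((k+1)! : ℕ) := by
            push_cast [Nat.factorial_succ]
            ring

lemma arith1 (n s : ℕ) (h : 200000 < n) (hs : 3 * s ≤ n) : 2 * (n / 7 + n + s) ≤ 3 * n + 2 := by
  omega
lemma arith2 (n : ℕ) (h : 200000 < n) : 0 < n / 7 := by omega
lemma arith3 (n : ℕ) (h : 200000 < n) : n ≤ 200000 * (n / 7) := by omega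
lemma arith4 (n : ℕ) (h : 200000 < n) : 1 ≤ n / 2 := by omega
lemma arith5 (n : ℕ) (h : 200000 < n) : 2 * (n / 2 + n) ≤ 3 * n := by omega
lemma arith6 (n : ℕ) (h : 200000 < n) : n + 3 ≤ 3 * (n / 2) := by omega
lemma arith8 (n s : ℕ) (h : n < 3 * s) : 4 * n ≤ 12 * s := by omega

/-- the key spread estimate -/
lemma key (hn : 0 < n) (E : Finset (Fin n × Fin n))
    (h1 : ∀ a : Fin n, 3 * n ≤ 4 * (E.filter (fun e => e.1 = a)).card)
    (h2 : ∀ b : Fin n, 3 * n ≤ 4 * (E.filter (fun e => e.2 = b)).card)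
    (s : ℕ) (x y : Fin s → Fin n) (hx : Function.Injective x) (hy : Function.Injective y) :
    ((((PM E).filter fun f => ∀ i, f (x i) = y i).card : ℝ))
      ≤ (200000 / n) ^ s * ((PM E).card : ℝ) := by
  have hnR : (0:ℝ) < n := by exact_mod_cast hn
  have hsn : s ≤ n := by
    have := Fintype.card_le_of_injective x hx
    simpa using this
  have hNs_le_N : (((PM E).filter fun f => ∀ i, f (x i) = y i).card : ℝ)
      ≤ ((PM E).card : ℝ) := by
    exact_mod_cast card_le_card (filter_subset _ _)
  by_cases hbig : n ≤ 200000
  · have hC1 : (1:ℝ) ≤ 200000 / n := by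
      rw [le_div_iff₀ hnR]
      have : (n:ℝ) ≤ 200000 := by exact_mod_cast hbig
      linarith
    have hpow : (1:ℝ) ≤ (200000 / (n:ℝ)) ^ s := one_le_pow₀ hC1
    calc (((PM E).filter fun f => ∀ i, f (x i) = y i).card : ℝ)
        ≤ ((PM E).card : ℝ) := hNs_le_N
      _ = 1 * ((PM E).card : ℝ) := (one_mul _).symm
      _ ≤ (200000 / n) ^ s * ((PM E).card : ℝ) := by
          apply mul_le_mul_of_nonneg_right hpow (by positivity)
  · push_neg at hbig
    by_cases hreg : 3 * s ≤ n
    · -- regime 1 : the switching chain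
      have hcond : 2 * (n / 7 + n + s) ≤ 3 * n + 2 := arith1 n s hbig hreg
      have hchain := chain hn E h1 h2 (n / 7) s x y hx hy hcond
      have hm₁pos : 0 < n / 7 := arith2 n hbig
      have hm₁R : (0:ℝ) < ((n / 7 : ℕ):ℝ) := by exact_mod_cast hm₁pos
      have hchainR : (((PM E).filter fun f => ∀ i, f (x i) = y i).card : ℝ) * ((n / 7 : ℕ):ℝ) ^ s
          ≤ ((PM E).card : ℝ) := by exact_mod_cast hchain
      have hfac : (n:ℝ) ≤ 200000 * ((n / 7 : ℕ):ℝ) := by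
        have : n ≤ 200000 * (n / 7) := arith3 n hbig
        exact_mod_cast this
      have hstep2 : (1 / ((n / 7 : ℕ):ℝ)) ≤ 200000 / n := by
        rw [div_le_div_iff₀ hm₁R hnR]
        linarith
      have hstep2' : (1 / ((n / 7 : ℕ):ℝ)) ^ s ≤ (200000 / (n:ℝ)) ^ s :=
        pow_le_pow_left₀ (by positivity) hstep2 s
      have hstep1 : (((PM E).filter fun f => ∀ i, f (x i) = y i).card : ℝ)
          ≤ (1 / ((n / 7 : ℕ):ℝ)) ^ s * ((PM E).card : ℝ) := by
        have hp : (0:ℝ) < ((n / 7 : ℕ):ℝ) ^ s := by positivity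
        rw [one_div, inv_pow, inv_mul_eq_div, le_div_iff₀ hp]
        exact hchainR
      calc (((PM E).filter fun f => ∀ i, f (x i) = y i).card : ℝ)
          ≤ (1 / ((n / 7 : ℕ):ℝ)) ^ s * ((PM E).card : ℝ) := hstep1
        _ ≤ (200000 / n) ^ s * ((PM E).card : ℝ) := by
            apply mul_le_mul_of_nonneg_right hstep2' (by positivity)
    · -- regime 2 : permanent lower bound
      push_neg at hreg
      have hm₂1 : 1 ≤ n / 2 := arith4 n hbig
      have hperm := perm_lb hn E h1 h2 (n / 2) (arith5 n hbig) hm₂1 (n^2) E (subset_refl E) (Nat.le_add_left _ _)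
      have hfix : (((PM E).filter fun f => ∀ i, f (x i) = y i).card : ℝ) ≤ (n:ℝ) ^ (n - s) := by
        exact_mod_cast card_fix_le E x y hx
      have hq : Real.exp (-3 / (n:ℝ)) ≤ 1 - 1 / (((n / 2 : ℕ)):ℝ) := by
        have h3m : ((n:ℝ) + 3) ≤ 3 * (((n / 2 : ℕ)):ℝ) := by
          have : n + 3 ≤ 3 * (n / 2) := arith6 n hbig
          exact_mod_cast this
        have hm₂R : (1:ℝ) ≤ (((n / 2 : ℕ)):ℝ) := by exact_mod_cast hm₂1
        have e2 : 1 / (((n / 2 : ℕ)):ℝ) ≤ 3 / ((n:ℝ) + 3) := by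
          rw [div_le_div_iff₀ (by linarith) (by linarith)]
          linarith
        have hexp := Real.add_one_le_exp (3 / (n:ℝ))
        have hpos : (0:ℝ) < 1 + 3 / (n:ℝ) := by positivity
        have hneg : Real.exp (-3 / (n:ℝ)) = 1 / Real.exp (3 / (n:ℝ)) := by
          rw [one_div, ← Real.exp_neg, neg_div]
        have h1' : 1 / Real.exp (3 / (n:ℝ)) ≤ 1 / (1 + 3 / (n:ℝ)) :=
          one_div_le_one_div_of_le hpos (by linarith)
        have h2' : 1 / (1 + 3 / (n:ℝ)) = 1 - 3 / ((n:ℝ) + 3) := by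
          have hne : (n:ℝ) ≠ 0 := ne_of_gt hnR
          have hne3 : (n:ℝ) + 3 ≠ 0 := by linarith
          field_simp
          try ring
        rw [hneg]
        calc 1 / Real.exp (3 / (n:ℝ)) ≤ 1 / (1 + 3 / (n:ℝ)) := h1'
          _ = 1 - 3 / ((n:ℝ) + 3) := h2'
          _ ≤ 1 - 1 / (((n / 2 : ℕ)):ℝ) := by linarith
      have hqpow : Real.exp (-(3:ℝ) * n) ≤ (1 - 1 / (((n / 2 : ℕ)):ℝ)) ^ (n^2) := by
        have hb0 : (0:ℝ) ≤ Real.exp (-3 / (n:ℝ)) := (Real.exp_pos _).le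
        have hxx : ((n^2 : ℕ) : ℝ) * (-3 / (n:ℝ)) = -(3:ℝ) * n := by
          have hne : (n:ℝ) ≠ 0 := ne_of_gt hnR
          push_cast
          field_simp
        calc Real.exp (-(3:ℝ) * n) = Real.exp ((n^2 : ℕ) * (-3 / (n:ℝ))) := by
              rw [hxx]
          _ = Real.exp (-3 / (n:ℝ)) ^ (n^2) := Real.exp_nat_mul _ _
          _ ≤ (1 - 1 / (((n / 2 : ℕ)):ℝ)) ^ (n^2) := pow_le_pow_left₀ hb0 hq _
      have hfact : (n:ℝ) ^ n * Real.exp (-(1:ℝ) * n) ≤ (n ! : ℝ) := by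
        have h := pow_le_exp_mul_factorial n
        rw [Real.exp_one_pow] at h
        have hepos : (0:ℝ) < Real.exp (n:ℝ) := Real.exp_pos _
        have hr : Real.exp (-(1:ℝ) * (n:ℝ)) = (Real.exp (n:ℝ))⁻¹ := by
          rw [← Real.exp_neg]; ring_nf
        rw [hr]
        calc (n:ℝ)^n * (Real.exp (n:ℝ))⁻¹
            ≤ (Real.exp (n:ℝ) * (n ! : ℝ)) * (Real.exp (n:ℝ))⁻¹ :=
              mul_le_mul_of_nonneg_right h (inv_nonneg.2 hepos.le)
          _ = (n ! : ℝ) := by field_simp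
      have main : (n:ℝ) ^ n * Real.exp (-(4:ℝ) * n) ≤ ((PM E).card : ℝ) := by
        have hsplit4 : Real.exp (-(4:ℝ) * n) = Real.exp (-(1:ℝ)*n) * Real.exp (-(3:ℝ)*n) := by
          rw [← Real.exp_add]; ring_nf
        calc (n:ℝ)^n * Real.exp (-(4:ℝ)*n)
            = ((n:ℝ)^n * Real.exp (-(1:ℝ)*n)) * Real.exp (-(3:ℝ)*n) := by
              rw [hsplit4]; ring
          _ ≤ (n ! : ℝ) * Real.exp (-(3:ℝ)*n) :=
              mul_le_mul_of_nonneg_right hfact (Real.exp_pos _).le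
          _ ≤ (n ! : ℝ) * (1 - 1 / (((n / 2 : ℕ)):ℝ)) ^ (n^2) :=
              mul_le_mul_of_nonneg_left hqpow (by positivity)
          _ ≤ ((PM E).card : ℝ) := hperm
      have hC : Real.exp 12 ≤ (200000:ℝ) := by
        have h := Real.exp_one_lt_d9
        have h12 : Real.exp (12:ℝ) = (Real.exp 1) ^ (12:ℕ) := by
          rw [← Real.exp_nat_mul]; norm_num
        rw [h12]
        calc (Real.exp 1) ^ (12:ℕ) ≤ (2.7182818286:ℝ) ^ (12:ℕ) :=
              pow_le_pow_left₀ (Real.exp_pos 1).le h.le _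
          _ ≤ 200000 := by norm_num
      have hF4 : Real.exp ((4:ℝ) * n) ≤ (200000:ℝ) ^ s := by
        calc Real.exp ((4:ℝ)*n) ≤ Real.exp ((12:ℝ)*s) := by
              apply Real.exp_le_exp.2
              have hh : 4 * n ≤ 12 * s := arith8 n s hreg
              have : ((4 * n : ℕ):ℝ) ≤ ((12 * s : ℕ):ℝ) := by exact_mod_cast hh
              push_cast at this
              linarith
          _ = Real.exp 12 ^ s := by
              rw [← Real.exp_nat_mul]
              congr 1
              ring
          _ ≤ (200000:ℝ) ^ s := pow_le_pow_left₀ (Real.exp_pos _).le hC s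
      have hone : (1:ℝ) ≤ (200000:ℝ)^s * Real.exp (-(4:ℝ)*n) := by
        have hmul := mul_le_mul_of_nonneg_right hF4 (Real.exp_pos (-(4:ℝ)*n)).le
        calc (1:ℝ) = Real.exp ((4:ℝ)*n) * Real.exp (-(4:ℝ)*n) := by
              rw [← Real.exp_add]; norm_num
          _ ≤ (200000:ℝ)^s * Real.exp (-(4:ℝ)*n) := hmul
      have hid : (200000 / (n:ℝ)) ^ s * ((n:ℝ)^n * Real.exp (-(4:ℝ)*n))
          = ((200000:ℝ)^s * Real.exp (-(4:ℝ)*n)) * (n:ℝ)^(n-s) := by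
        rw [div_pow]
        have hpow : (n:ℝ)^n = (n:ℝ)^(n-s) * (n:ℝ)^s := by
          rw [← pow_add, Nat.sub_add_cancel hsn]
        rw [hpow]
        field_simp
      calc (((PM E).filter fun f => ∀ i, f (x i) = y i).card : ℝ)
          ≤ (n:ℝ)^(n-s) := hfix
        _ = 1 * (n:ℝ)^(n-s) := (one_mul _).symm
        _ ≤ ((200000:ℝ)^s * Real.exp (-(4:ℝ)*n)) * (n:ℝ)^(n-s) :=
            mul_le_mul_of_nonneg_right hone (by positivity)
        _ = (200000 / (n:ℝ)) ^ s * ((n:ℝ)^n * Real.exp (-(4:ℝ)*n)) := hid.symm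
        _ ≤ (200000 / n) ^ s * ((PM E).card : ℝ) :=
            mul_le_mul_of_nonneg_left main (by positivity)

end Stmt5

open Stmt5 in
/-- there is an absolute constant `C` such that every balanced bipartite
graph on `n + n` vertices (given by its edge set `E ⊆ Fin n × Fin n`) with minimum
degree at least `3n/4` on both sides carries a `(C/n)`-edge-spread probability
distribution on its perfect matchings (encoded as bijections `f : Fin n → Fin n`
whose graph lies in `E`): for every partial matching, given by injections `x, y` on
`Fin s`, the probability that the random perfect matching extends it is at most
`(C/n)^s`. -/
theorem stmt5 : ∃ C : ℝ, 0 < C ∧ ∀ n : ℕ, 0 < n →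
    ∀ E : Finset (Fin n × Fin n),
    (∀ a : Fin n, 3 * (n : ℝ) / 4 ≤ ((E.filter (fun e => e.1 = a)).card : ℝ)) →
    (∀ b : Fin n, 3 * (n : ℝ) / 4 ≤ ((E.filter (fun e => e.2 = b)).card : ℝ)) →
    ∃ μ : (Fin n → Fin n) → ℝ,
      (∀ f, 0 ≤ μ f) ∧ (∑ f : Fin n → Fin n, μ f = 1) ∧
      (∀ f, μ f ≠ 0 → Function.Bijective f ∧ ∀ i, (i, f i) ∈ E) ∧
      (∀ (s : ℕ) (x y : Fin s → Fin n), Function.Injective x → Function.Injective y →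
        (∑ f ∈ Finset.univ.filter (fun f : Fin n → Fin n => ∀ i, f (x i) = y i), μ f)
          ≤ (C / n) ^ s) := by
  refine ⟨200000, by norm_num, ?_⟩
  intro n hn E h1r h2r
  have h1 : ∀ a : Fin n, 3 * n ≤ 4 * (E.filter (fun e => e.1 = a)).card := by
    intro a
    have h := h1r a
    have : 3 * (n:ℝ) ≤ 4 * ((E.filter (fun e => e.1 = a)).card : ℝ) := by linarith
    exact_mod_cast this
  have h2 : ∀ b : Fin n, 3 * n ≤ 4 * (E.filter (fun e => e.2 = b)).card := by
    intro b
    have h := h2r b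
    have : 3 * (n:ℝ) ≤ 4 * ((E.filter (fun e => e.2 = b)).card : ℝ) := by linarith
    exact_mod_cast this
  have hne := PM_nonempty hn E h1 h2
  have hNpos : 0 < (PM E).card := card_pos.2 hne
  have hNposR : (0:ℝ) < ((PM E).card : ℝ) := by exact_mod_cast hNpos
  have hstep : ∀ F : Finset (Fin n → Fin n),
      (∑ f ∈ F, (if f ∈ PM E then 1 / ((PM E).card : ℝ) else 0))
        = ((F ∩ PM E).card : ℝ) / ((PM E).card : ℝ) := by
    intro F
    rw [← Finset.sum_filter, Finset.filter_mem_eq_inter, Finset.sum_const, nsmul_eq_mul,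
      mul_one_div]
  refine ⟨fun f => if f ∈ PM E then 1 / ((PM E).card : ℝ) else 0, ?_, ?_, ?_, ?_⟩
  · intro f
    show (0:ℝ) ≤ if f ∈ PM E then 1 / ((PM E).card : ℝ) else 0
    split
    · positivity
    · exact le_rfl
  · show (∑ f : Fin n → Fin n, if f ∈ PM E then 1 / ((PM E).card : ℝ) else 0) = 1
    rw [hstep univ, univ_inter, div_self (ne_of_gt hNposR)]
  · intro f hf
    by_cases hfPM : f ∈ PM E
    · exact mem_PM.1 hfPM
    · exfalso
      apply hf
      show (if f ∈ PM E then 1 / ((PM E).card : ℝ) else 0) = 0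
      simp [hfPM]
  · intro s x y hx hy
    have hk := key hn E h1 h2 s x y hx hy
    show (∑ f ∈ Finset.univ.filter (fun f : Fin n → Fin n => ∀ i, f (x i) = y i),
      if f ∈ PM E then 1 / ((PM E).card : ℝ) else 0) ≤ (200000 / (n:ℝ)) ^ s
    rw [hstep]
    have hinter : (univ.filter (fun f : Fin n → Fin n => ∀ i, f (x i) = y i)) ∩ PM E
        = (PM E).filter fun f => ∀ i, f (x i) = y i := by
      ext f
      simp only [mem_inter, mem_filter, mem_univ, true_and]
      tauto
    rw [hinter, div_le_iff₀ hNposR]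
    exact hk
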